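/- Fix I_0 > 0 with I_0 ≤ I_max. If q* maximizes −I(Y;Y_N) over the set of quantizers q satisfying I(X;Y_N)(q) ≥ I_0, then I(X;Y_N)(q*) = I_0 (the constraint is active). -/

import Mathlib

open Real

/-- Marginal of X from the joint distribution P(x,y). -/
noncomputable def pX {Kx K : ℕ} (P : Fin Kx → Fin K → ℝ) (x : Fin Kx) : ℝ :=
  ∑ k, P x k

/-- Marginal of Y from the joint distribution P(x,y). -/
noncomputable def pY {Kx K : ℕ} (P : Fin Kx → Fin K → ℝ) (k : Fin K) : ℝ :=
  ∑ x, P x k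

/-- Joint distribution of (X, Y_N) induced by the quantizer q. -/
noncomputable def pXN {Kx K N : ℕ} (P : Fin Kx → Fin K → ℝ)
    (q : Fin N → Fin K → ℝ) (x : Fin Kx) (ν : Fin N) : ℝ :=
  ∑ k, P x k * q ν k

/-- Marginal of Y_N induced by the quantizer q and a distribution p on Y. -/
noncomputable def pN {K N : ℕ} (p : Fin K → ℝ) (q : Fin N → Fin K → ℝ) (ν : Fin N) : ℝ :=
  ∑ k, p k * q ν k

/-- Conditional entropy H(Y_N|Y). -/
noncomputable def Hcond {K N : ℕ} (p : Fin K → ℝ) (q : Fin N → Fin K → ℝ) : ℝ :=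
  -∑ k, p k * ∑ ν, q ν k * Real.log (q ν k)

/-- Mutual information I(Y;Y_N) induced by the quantizer q. -/
noncomputable def IYN {K N : ℕ} (p : Fin K → ℝ) (q : Fin N → Fin K → ℝ) : ℝ :=
  ∑ ν, ∑ k, q ν k * p k * Real.log (q ν k / pN p q ν)

/-- Mutual information I(X;Y_N) induced by the quantizer q through X → Y → Y_N. -/
noncomputable def IXN {Kx K N : ℕ} (P : Fin Kx → Fin K → ℝ)
    (q : Fin N → Fin K → ℝ) : ℝ :=
  ∑ x, ∑ ν, pXN P q x ν * Real.log (pXN P q x ν / (pX P x * pN (pY P) q ν))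

/-- Mutual information I(X;Y). -/
noncomputable def IXY {Kx K : ℕ} (P : Fin Kx → Fin K → ℝ) : ℝ :=
  ∑ x, ∑ k, P x k * Real.log (P x k / (pX P x * pY P k))

/-- The set Δ of stochastic quantizers. -/
def Δset (N K : ℕ) : Set (Fin N → Fin K → ℝ) :=
  {q | (∀ ν k, 0 ≤ q ν k) ∧ ∀ k, ∑ ν, q ν k = 1}

/-- The (ambient-coordinate) gradient of I(X;Y_N): ∂I/∂q_{νk} = ∑_x p(x,y_k) ln(p(x|ν)/p(x)). -/
noncomputable def gradI {Kx K N : ℕ} (P : Fin Kx → Fin K → ℝ)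
    (q : Fin N → Fin K → ℝ) (ν : Fin N) (k : Fin K) : ℝ :=
  ∑ x, P x k * Real.log ((pXN P q x ν / pN (pY P) q ν) / pX P x)



private lemma kl_term_le {p q m : ℝ} (hp : 0 < p) (hq : 0 ≤ q) (hm : 0 ≤ m)
    (h0 : m = 0 → q = 0) : q * p - p * m ≤ q * p * Real.log (q / m) := by
  rcases eq_or_lt_of_le hq with h | h
  · rw [← h]; nlinarith [mul_nonneg hp.le hm]
  · have hm' : 0 < m := by
      rcases eq_or_lt_of_le hm with h' | h'
      · have := h0 h'.symm; linarith
      · exact h'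
    have hlog : Real.log (m / q) ≤ m / q - 1 := Real.log_le_sub_one_of_pos (by positivity)
    have hinv : Real.log (q / m) = -Real.log (m / q) := by
      rw [← Real.log_inv]; congr 1; field_simp
    have h2 : q * (m / q - 1) = m - q := by field_simp
    have h3 : q * Real.log (m / q) ≤ m - q := by
      have := mul_le_mul_of_nonneg_left hlog h.le
      linarith [h2 ▸ this]
    rw [hinv]
    nlinarith [mul_le_mul_of_nonneg_left h3 hp.le]

private lemma kl_term_lt {p q m : ℝ} (hp : 0 < p) (hq : 0 ≤ q) (hm : 0 ≤ m)
    (h0 : m = 0 → q = 0) (hne : q ≠ m) : q * p - p * m < q * p * Real.log (q / m) := by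
  rcases eq_or_lt_of_le hq with h | h
  · rw [← h]
    have hm' : 0 < m := by
      rcases eq_or_lt_of_le hm with h' | h'
      · exact absurd h'.symm (by rw [← h] at hne; exact fun hh => hne hh.symm)
      · exact h'
    have : 0 < p * m := mul_pos hp hm'
    simp only [zero_mul, zero_sub]
    linarith
  · have hm' : 0 < m := by
      rcases eq_or_lt_of_le hm with h' | h'
      · have := h0 h'.symm; linarith
      · exact h'
    have hne1 : m / q ≠ 1 := by
      intro hh
      apply hne
      field_simp at hh
      linarith
    have hlog : Real.log (m / q) < m / q - 1 := Real.log_lt_sub_one_of_pos (by positivity) hne1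
    have hinv : Real.log (q / m) = -Real.log (m / q) := by
      rw [← Real.log_inv]; congr 1; field_simp
    have h2 : q * (m / q - 1) = m - q := by field_simp
    have h3 : q * Real.log (m / q) < m - q := by
      have := mul_lt_mul_of_pos_left hlog h
      linarith [h2 ▸ this]
    rw [hinv]
    nlinarith [mul_lt_mul_of_pos_left h3 hp]

private lemma logsum {a b c d : ℝ} (ha : 0 ≤ a) (hb : 0 ≤ b) (hc : 0 ≤ c) (hd : 0 ≤ d)
    (hca : c = 0 → a = 0) (hdb : d = 0 → b = 0) :
    (a + b) * Real.log ((a + b) / (c + d)) ≤ a * Real.log (a / c) + b * Real.log (b / d) := by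
  rcases eq_or_lt_of_le hc with hc0 | hc0
  · have ha0 := hca hc0.symm
    simp [ha0, ← hc0]
  rcases eq_or_lt_of_le hd with hd0 | hd0
  · have hb0 := hdb hd0.symm
    simp [hb0, ← hd0]
  have hs : 0 < c + d := by linarith
  have key := convexOn_mul_log.2 (Set.mem_Ici.mpr (by positivity : (0:ℝ) ≤ a / c))
    (Set.mem_Ici.mpr (by positivity : (0:ℝ) ≤ b / d))
    (by positivity : (0:ℝ) ≤ c / (c + d)) (by positivity : (0:ℝ) ≤ d / (c + d))
    (by field_simp)
  simp only [smul_eq_mul] at key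
  have e1 : c / (c + d) * (a / c) + d / (c + d) * (b / d) = (a + b) / (c + d) := by
    field_simp
  rw [e1] at key
  have key2 := mul_le_mul_of_nonneg_left key hs.le
  calc (a + b) * Real.log ((a + b) / (c + d))
      = (c + d) * ((a + b) / (c + d) * Real.log ((a + b) / (c + d))) := by
        field_simp
    _ ≤ (c + d) * (c / (c + d) * (a / c * Real.log (a / c)) +
          d / (c + d) * (b / d * Real.log (b / d))) := key2
    _ = a * Real.log (a / c) + b * Real.log (b / d) := by field_simp

private lemma scale_s {s u v : ℝ} (hs : 0 ≤ s) :
    s * u * Real.log (s * u / (s * v)) = s * (u * Real.log (u / v)) := by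
  rcases eq_or_lt_of_le hs with h | h
  · simp [← h]
  · rw [mul_div_mul_left u v (ne_of_gt h)]; ring

private lemma log_split {p q m : ℝ} (hp : 0 < p) (hq : 0 ≤ q) (hm : 0 ≤ m)
    (h0 : m = 0 → q = 0) :
    q * p * Real.log (q * p / m) = q * p * Real.log (q / m) + q * p * Real.log p := by
  rcases eq_or_lt_of_le hq with h | h
  · simp [← h]
  · have hm' : 0 < m := by
      rcases eq_or_lt_of_le hm with h' | h'
      · have := h0 h'.symm; linarith
      · exact h'
    have e : q * p / m = q / m * p := by ring
    rw [e, Real.log_mul (by positivity) (ne_of_gt hp)]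
    ring

private lemma sum_affine {n : ℕ} (f g : Fin n → ℝ) (s t : ℝ) :
    ∑ k, (s * f k + t * g k) = s * ∑ k, f k + t * ∑ k, g k := by
  simp [Finset.sum_add_distrib, Finset.mul_sum]

private lemma pN_eq_zero {K N : ℕ} (p : Fin K → ℝ) (hp : ∀ k, 0 < p k)
    (q : Fin N → Fin K → ℝ) (hq : ∀ ν k, 0 ≤ q ν k) (ν : Fin N)
    (h : pN p q ν = 0) (k : Fin K) : q ν k = 0 := by
  have h' := (Finset.sum_eq_zero_iff_of_nonneg
    (fun k _ => mul_nonneg (hp k).le (hq ν k))).mp h k (Finset.mem_univ k)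
  rcases mul_eq_zero.mp h' with h'' | h''
  · exact absurd h'' (ne_of_gt (hp k))
  · exact h''

private lemma pN_affine {K N : ℕ} (p : Fin K → ℝ) (q0 q1 : Fin N → Fin K → ℝ) (t : ℝ)
    (ν : Fin N) :
    pN p (fun ν k => (1 - t) * q0 ν k + t * q1 ν k) ν
      = (1 - t) * pN p q0 ν + t * pN p q1 ν := by
  simp only [pN]
  rw [← sum_affine (fun k => p k * q0 ν k) (fun k => p k * q1 ν k) (1 - t) t]
  exact Finset.sum_congr rfl fun k _ => by ring

private lemma convex_term {pk Q0 Q1 M0 M1 t : ℝ} (hpk : 0 < pk)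
    (hQ0 : 0 ≤ Q0) (hQ1 : 0 ≤ Q1) (hM0 : 0 ≤ M0) (hM1 : 0 ≤ M1)
    (hz0 : M0 = 0 → Q0 = 0) (hz1 : M1 = 0 → Q1 = 0)
    (ht0 : 0 ≤ t) (ht1 : t ≤ 1) :
    ((1 - t) * Q0 + t * Q1) * pk *
        Real.log (((1 - t) * Q0 + t * Q1) / ((1 - t) * M0 + t * M1)) ≤
      (1 - t) * (Q0 * pk * Real.log (Q0 / M0)) + t * (Q1 * pk * Real.log (Q1 / M1)) := by
  have h1t : 0 ≤ 1 - t := by linarith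
  set Q := (1 - t) * Q0 + t * Q1 with hQdef
  set M := (1 - t) * M0 + t * M1 with hMdef
  have hQn : 0 ≤ Q := add_nonneg (mul_nonneg h1t hQ0) (mul_nonneg ht0 hQ1)
  have hMn : 0 ≤ M := add_nonneg (mul_nonneg h1t hM0) (mul_nonneg ht0 hM1)
  have hzQ : M = 0 → Q = 0 := by
    intro hM
    have hm0 : (1 - t) * M0 = 0 ∧ t * M1 = 0 := by
      constructor <;> nlinarith [mul_nonneg h1t hM0, mul_nonneg ht0 hM1]
    have e0 : (1 - t) * Q0 = 0 := by
      rcases mul_eq_zero.mp hm0.1 with h | h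
      · rw [h, zero_mul]
      · rw [hz0 h, mul_zero]
    have e1 : t * Q1 = 0 := by
      rcases mul_eq_zero.mp hm0.2 with h | h
      · rw [h, zero_mul]
      · rw [hz1 h, mul_zero]
    rw [hQdef, e0, e1, add_zero]
  have s1 : Q * pk * Real.log (Q * pk / M) =
      Q * pk * Real.log (Q / M) + Q * pk * Real.log pk :=
    log_split hpk hQn hMn hzQ
  have s2 := logsum (a := (1 - t) * (Q0 * pk)) (b := t * (Q1 * pk))
    (c := (1 - t) * M0) (d := t * M1)
    (mul_nonneg h1t (mul_nonneg hQ0 hpk.le)) (mul_nonneg ht0 (mul_nonneg hQ1 hpk.le))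
    (mul_nonneg h1t hM0) (mul_nonneg ht0 hM1)
    (by intro h; rcases mul_eq_zero.mp h with h | h
        · rw [h, zero_mul]
        · rw [hz0 h]; ring)
    (by intro h; rcases mul_eq_zero.mp h with h | h
        · rw [h, zero_mul]
        · rw [hz1 h]; ring)
  rw [show (1 - t) * (Q0 * pk) + t * (Q1 * pk) = Q * pk by rw [hQdef]; ring] at s2
  rw [show (1 - t) * M0 + t * M1 = M from rfl] at s2
  have s3a : (1 - t) * (Q0 * pk) * Real.log ((1 - t) * (Q0 * pk) / ((1 - t) * M0)) =
      (1 - t) * (Q0 * pk * Real.log (Q0 * pk / M0)) := scale_s h1t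
  have s3b : t * (Q1 * pk) * Real.log (t * (Q1 * pk) / (t * M1)) =
      t * (Q1 * pk * Real.log (Q1 * pk / M1)) := scale_s ht0
  have sp0 : (1 - t) * (Q0 * pk * Real.log (Q0 * pk / M0)) =
      (1 - t) * (Q0 * pk * Real.log (Q0 / M0)) + (1 - t) * (Q0 * pk * Real.log pk) := by
    rw [log_split hpk hQ0 hM0 hz0]; ring
  have sp1 : t * (Q1 * pk * Real.log (Q1 * pk / M1)) =
      t * (Q1 * pk * Real.log (Q1 / M1)) + t * (Q1 * pk * Real.log pk) := by
    rw [log_split hpk hQ1 hM1 hz1]; ring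
  have hr : Q * pk * Real.log pk =
      (1 - t) * (Q0 * pk * Real.log pk) + t * (Q1 * pk * Real.log pk) := by
    rw [hQdef]; ring
  linarith [s1, s2, s3a, s3b, sp0, sp1, hr]



private lemma IYN_convex {K N : ℕ} (p : Fin K → ℝ) (hp : ∀ k, 0 < p k)
    {q0 q1 : Fin N → Fin K → ℝ} (h0 : q0 ∈ Δset N K) (h1 : q1 ∈ Δset N K)
    {t : ℝ} (ht0 : 0 ≤ t) (ht1 : t ≤ 1) :
    IYN p (fun ν k => (1 - t) * q0 ν k + t * q1 ν k) ≤
      (1 - t) * IYN p q0 + t * IYN p q1 := by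
  obtain ⟨hq00, hq01⟩ := h0
  obtain ⟨hq10, hq11⟩ := h1
  have hpN0 : ∀ ν, 0 ≤ pN p q0 ν :=
    fun ν => Finset.sum_nonneg fun k _ => mul_nonneg (hp k).le (hq00 ν k)
  have hpN1 : ∀ ν, 0 ≤ pN p q1 ν :=
    fun ν => Finset.sum_nonneg fun k _ => mul_nonneg (hp k).le (hq10 ν k)
  simp only [IYN, pN_affine, Finset.mul_sum, ← Finset.sum_add_distrib]
  apply Finset.sum_le_sum
  intro ν _
  apply Finset.sum_le_sum
  intro k _
  exact convex_term (hp k) (hq00 ν k) (hq10 ν k) (hpN0 ν) (hpN1 ν)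
    (fun h => pN_eq_zero p hp q0 hq00 ν h k) (fun h => pN_eq_zero p hp q1 hq10 ν h k)
    ht0 ht1

private lemma IYN_nonneg_eq {K N : ℕ} (p : Fin K → ℝ) (hp : ∀ k, 0 < p k)
    (hp1 : ∑ k, p k = 1) (q : Fin N → Fin K → ℝ) (hq0 : ∀ ν k, 0 ≤ q ν k)
    (hq1 : ∀ k, ∑ ν, q ν k = 1) :
    0 ≤ IYN p q ∧ (IYN p q = 0 → ∀ ν k, q ν k = pN p q ν) := by
  have hpN0 : ∀ ν, 0 ≤ pN p q ν :=
    fun ν => Finset.sum_nonneg fun k _ => mul_nonneg (hp k).le (hq0 ν k)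
  have hz : ∀ ν k, pN p q ν = 0 → q ν k = 0 := fun ν k h => pN_eq_zero p hp q hq0 ν h k
  have hterm : ∀ ν k, q ν k * p k - p k * pN p q ν ≤
      q ν k * p k * Real.log (q ν k / pN p q ν) :=
    fun ν k => kl_term_le (hp k) (hq0 ν k) (hpN0 ν) (hz ν k)
  have hpNsum : ∑ ν, pN p q ν = 1 := by
    simp only [pN]
    rw [Finset.sum_comm]
    have e : ∀ k : Fin K, ∑ ν, p k * q ν k = p k := fun k => by
      rw [← Finset.mul_sum, hq1 k, mul_one]
    simp [e, hp1]
  have e1 : ∑ ν, ∑ k, q ν k * p k = 1 := by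
    rw [Finset.sum_comm]
    have e : ∀ k : Fin K, ∑ ν, q ν k * p k = p k := fun k => by
      rw [← Finset.sum_mul, hq1 k, one_mul]
    simp [e, hp1]
  have e2 : ∑ ν, ∑ k, p k * pN p q ν = 1 := by
    have e : ∀ ν : Fin N, ∑ k, p k * pN p q ν = pN p q ν := fun ν => by
      rw [← Finset.sum_mul, hp1, one_mul]
    simp [e, hpNsum]
  have hdiff : ∑ ν, ∑ k, (q ν k * p k - p k * pN p q ν) = 0 := by
    simp only [Finset.sum_sub_distrib]
    rw [e1, e2, sub_self]
  have hIYN : IYN p q = ∑ ν, ∑ k, q ν k * p k * Real.log (q ν k / pN p q ν) := rfl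
  constructor
  · rw [hIYN, ← hdiff]
    exact Finset.sum_le_sum fun ν _ => Finset.sum_le_sum fun k _ => hterm ν k
  · intro h0 ν k
    have hg : ∀ ν k, 0 ≤ q ν k * p k * Real.log (q ν k / pN p q ν) -
        (q ν k * p k - p k * pN p q ν) := fun ν k => by linarith [hterm ν k]
    have hsumg : ∑ ν, ∑ k, (q ν k * p k * Real.log (q ν k / pN p q ν) -
        (q ν k * p k - p k * pN p q ν)) = 0 := by
      simp only [Finset.sum_sub_distrib]
      rw [← hIYN, h0, e1, e2]
      norm_num
    have hν := (Finset.sum_eq_zero_iff_of_nonneg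
      (fun ν _ => Finset.sum_nonneg fun k _ => hg ν k)).mp hsumg ν (Finset.mem_univ ν)
    have hk := (Finset.sum_eq_zero_iff_of_nonneg (fun k _ => hg ν k)).mp hν k
      (Finset.mem_univ k)
    by_contra hne
    have := kl_term_lt (hp k) (hq0 ν k) (hpN0 ν) (hz ν k) hne
    linarith


theorem stmt3 {Kx K N : ℕ} (P : Fin Kx → Fin K → ℝ) (hP : ∀ x k, 0 ≤ P x k)
    (hPsum : ∑ x, ∑ k, P x k = 1) (hpY : ∀ k, 0 < pY P k) (hpX : ∀ x, 0 < pX P x)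
    (I0 : ℝ) (hI0 : 0 < I0)
    (hImax : ∃ q ∈ Δset N K, I0 ≤ IXN P q)
    (qs : Fin N → Fin K → ℝ) (hqs : qs ∈ Δset N K) (hfeas : I0 ≤ IXN P qs)
    (hmax : ∀ q ∈ Δset N K, I0 ≤ IXN P q → -(IYN (pY P) q) ≤ -(IYN (pY P) qs)) :
    IXN P qs = I0 := by
  classical
  by_contra hne0
  have hlt : I0 < IXN P qs := lt_of_le_of_ne hfeas fun h => hne0 h.symm
  obtain ⟨hqs0, hqs1⟩ := hqs
  have hKx : Kx ≠ 0 := by rintro rfl; simp at hPsum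
  have hK : K ≠ 0 := by
    rintro rfl
    have := hpX ⟨0, Nat.pos_of_ne_zero hKx⟩
    simp [pX] at this
  have hN : N ≠ 0 := by
    rintro rfl
    have := hqs1 ⟨0, Nat.pos_of_ne_zero hK⟩
    simp at this
  have hNpos : (0:ℝ) < (N:ℝ) := by exact_mod_cast Nat.pos_of_ne_zero hN
  have hpY1 : ∑ k, pY P k = 1 := by
    simp only [pY]; rw [Finset.sum_comm]; exact hPsum
  have hpXNnn : ∀ x ν, 0 ≤ pXN P qs x ν :=
    fun x ν => Finset.sum_nonneg fun k _ => mul_nonneg (hP x k) (hqs0 ν k)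
  have hpNqs : ∀ ν, 0 ≤ pN (pY P) qs ν :=
    fun ν => Finset.sum_nonneg fun k _ => mul_nonneg (hpY k).le (hqs0 ν k)
  have hsumN : ∑ _ν : Fin N, (N:ℝ)⁻¹ = 1 := by
    rw [Finset.sum_const, Finset.card_univ, Fintype.card_fin, nsmul_eq_mul,
      mul_inv_cancel₀ (ne_of_gt hNpos)]
  -- affine formulas
  have hAeq : ∀ (t : ℝ) (x : Fin Kx) (ν : Fin N),
      pXN P (fun ν k => (1 - t) * qs ν k + t * (N:ℝ)⁻¹) x ν
        = (1 - t) * pXN P qs x ν + t * (pX P x * (N:ℝ)⁻¹) := by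
    intro t x ν
    simp only [pXN]
    calc ∑ k, P x k * ((1 - t) * qs ν k + t * (N:ℝ)⁻¹)
        = (1 - t) * ∑ k, P x k * qs ν k + t * ∑ k, P x k * (N:ℝ)⁻¹ := by
          rw [← sum_affine]; exact Finset.sum_congr rfl fun k _ => by ring
      _ = (1 - t) * pXN P qs x ν + t * (pX P x * (N:ℝ)⁻¹) := by
          rw [← Finset.sum_mul]; rfl
  have hBeq : ∀ (t : ℝ) (ν : Fin N),
      pN (pY P) (fun ν k => (1 - t) * qs ν k + t * (N:ℝ)⁻¹) ν
        = (1 - t) * pN (pY P) qs ν + t * (N:ℝ)⁻¹ := by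
    intro t ν
    simp only [pN]
    calc ∑ k, pY P k * ((1 - t) * qs ν k + t * (N:ℝ)⁻¹)
        = (1 - t) * ∑ k, pY P k * qs ν k + t * ∑ k, pY P k * (N:ℝ)⁻¹ := by
          rw [← sum_affine]; exact Finset.sum_congr rfl fun k _ => by ring
      _ = (1 - t) * pN (pY P) qs ν + t * (N:ℝ)⁻¹ := by
          rw [← Finset.sum_mul, hpY1, one_mul]; rfl
  -- continuity of the auxiliary expression
  set F : ℝ → ℝ := fun t => ∑ x, ∑ ν,
      (((1 - t) * pXN P qs x ν + t * (pX P x * (N:ℝ)⁻¹)) *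
        Real.log ((1 - t) * pXN P qs x ν + t * (pX P x * (N:ℝ)⁻¹)) -
       ((1 - t) * pXN P qs x ν + t * (pX P x * (N:ℝ)⁻¹)) *
        Real.log (pX P x * ((1 - t) * pN (pY P) qs ν + t * (N:ℝ)⁻¹))) with hF
  have hterm_cont : ∀ (x : Fin Kx) (ν : Fin N), ContinuousAt (fun t : ℝ =>
      ((1 - t) * pXN P qs x ν + t * (pX P x * (N:ℝ)⁻¹)) *
        Real.log ((1 - t) * pXN P qs x ν + t * (pX P x * (N:ℝ)⁻¹)) -
      ((1 - t) * pXN P qs x ν + t * (pX P x * (N:ℝ)⁻¹)) *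
        Real.log (pX P x * ((1 - t) * pN (pY P) qs ν + t * (N:ℝ)⁻¹))) 0 := by
    intro x ν
    have hα : Continuous (fun t : ℝ => (1 - t) * pXN P qs x ν + t * (pX P x * (N:ℝ)⁻¹)) := by
      fun_prop
    have c1 : ContinuousAt (fun t : ℝ =>
        ((1 - t) * pXN P qs x ν + t * (pX P x * (N:ℝ)⁻¹)) *
          Real.log ((1 - t) * pXN P qs x ν + t * (pX P x * (N:ℝ)⁻¹))) 0 :=
      (Real.continuous_mul_log.comp hα).continuousAt
    have c2 : ContinuousAt (fun t : ℝ =>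
        ((1 - t) * pXN P qs x ν + t * (pX P x * (N:ℝ)⁻¹)) *
          Real.log (pX P x * ((1 - t) * pN (pY P) qs ν + t * (N:ℝ)⁻¹))) 0 := by
      by_cases hB0 : pN (pY P) qs ν = 0
      · have hA0 : pXN P qs x ν = 0 := by
          apply Finset.sum_eq_zero
          intro k _
          rw [pN_eq_zero (pY P) hpY qs hqs0 ν hB0 k, mul_zero]
        have hfe : (fun t : ℝ =>
            ((1 - t) * pXN P qs x ν + t * (pX P x * (N:ℝ)⁻¹)) *
              Real.log (pX P x * ((1 - t) * pN (pY P) qs ν + t * (N:ℝ)⁻¹))) =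
            fun t : ℝ =>
            ((1 - t) * pXN P qs x ν + t * (pX P x * (N:ℝ)⁻¹)) *
              Real.log ((1 - t) * pXN P qs x ν + t * (pX P x * (N:ℝ)⁻¹)) := by
          funext s
          rw [show pX P x * ((1 - s) * pN (pY P) qs ν + s * (N:ℝ)⁻¹)
              = (1 - s) * pXN P qs x ν + s * (pX P x * (N:ℝ)⁻¹) by rw [hA0, hB0]; ring]
        rw [hfe]
        exact c1
      · have hBpos : 0 < pN (pY P) qs ν := lt_of_le_of_ne (hpNqs ν) (Ne.symm hB0)
        have hβ : Continuous (fun t : ℝ =>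
            pX P x * ((1 - t) * pN (pY P) qs ν + t * (N:ℝ)⁻¹)) := by fun_prop
        have hne : pX P x * ((1 - (0:ℝ)) * pN (pY P) qs ν + 0 * (N:ℝ)⁻¹) ≠ 0 := by
          have h1 : (0:ℝ) < (1 - (0:ℝ)) * pN (pY P) qs ν + 0 * (N:ℝ)⁻¹ := by
            norm_num; exact hBpos
          exact ne_of_gt (mul_pos (hpX x) h1)
        have hlogc : ContinuousAt (fun t : ℝ =>
            Real.log (pX P x * ((1 - t) * pN (pY P) qs ν + t * (N:ℝ)⁻¹))) 0 :=
          hβ.continuousAt.log hne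
        exact hα.continuousAt.mul hlogc
    exact c1.sub c2
  have hFcont : ContinuousAt F 0 := by
    rw [hF]
    exact tendsto_finset_sum _ fun x _ => tendsto_finset_sum _ fun ν _ => hterm_cont x ν
  -- IXN agrees with F on [0,1]
  have hFeq : ∀ t ∈ Set.Icc (0:ℝ) 1,
      IXN P (fun ν k => (1 - t) * qs ν k + t * (N:ℝ)⁻¹) = F t := by
    intro t ht
    rw [hF]
    simp only [IXN, hAeq, hBeq]
    apply Finset.sum_congr rfl; intro x _
    apply Finset.sum_congr rfl; intro ν _
    rcases eq_or_ne ((1 - t) * pXN P qs x ν + t * (pX P x * (N:ℝ)⁻¹)) 0 with hα0 | hα0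
    · rw [hα0]; simp
    · have hβne : pX P x * ((1 - t) * pN (pY P) qs ν + t * (N:ℝ)⁻¹) ≠ 0 := by
        by_cases hB0 : pN (pY P) qs ν = 0
        · have hA0 : pXN P qs x ν = 0 := by
            apply Finset.sum_eq_zero
            intro k _
            rw [pN_eq_zero (pY P) hpY qs hqs0 ν hB0 k, mul_zero]
          have heq2 : pX P x * ((1 - t) * pN (pY P) qs ν + t * (N:ℝ)⁻¹)
              = (1 - t) * pXN P qs x ν + t * (pX P x * (N:ℝ)⁻¹) := by
            rw [hA0, hB0]; ring
          rw [heq2]; exact hα0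
        · have hBpos : 0 < pN (pY P) qs ν := lt_of_le_of_ne (hpNqs ν) (Ne.symm hB0)
          have hβpos : 0 < (1 - t) * pN (pY P) qs ν + t * (N:ℝ)⁻¹ := by
            rcases eq_or_lt_of_le ht.2 with h1 | h1
            · rw [← h1]; norm_num; positivity
            · have h2 : 0 < (1 - t) * pN (pY P) qs ν := mul_pos (by linarith) hBpos
              have h3 : 0 ≤ t * (N:ℝ)⁻¹ := mul_nonneg ht.1 (by positivity)
              linarith
          exact ne_of_gt (mul_pos (hpX x) hβpos)
      rw [Real.log_div hα0 hβne]
      ring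
  -- tendsto
  have hqt0 : (fun ν k => (1 - (0:ℝ)) * qs ν k + 0 * (N:ℝ)⁻¹) = qs := by
    funext ν k; ring
  have hTend : Filter.Tendsto
      (fun t : ℝ => IXN P (fun ν k => (1 - t) * qs ν k + t * (N:ℝ)⁻¹))
      (nhdsWithin 0 (Set.Icc 0 1)) (nhds (IXN P qs)) := by
    have h1 : ContinuousWithinAt
        (fun t : ℝ => IXN P (fun ν k => (1 - t) * qs ν k + t * (N:ℝ)⁻¹))
        (Set.Icc 0 1) 0 :=
      (hFcont.continuousWithinAt).congr hFeq (hFeq 0 ⟨le_refl 0, zero_le_one⟩)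
    have h2 : IXN P (fun ν k => (1 - (0:ℝ)) * qs ν k + 0 * (N:ℝ)⁻¹) = IXN P qs := by
      rw [hqt0]
    rw [← h2]
    exact h1
  have hev : ∀ᶠ t in nhdsWithin 0 (Set.Icc (0:ℝ) 1),
      I0 < IXN P (fun ν k => (1 - t) * qs ν k + t * (N:ℝ)⁻¹) :=
    hTend.eventually (eventually_gt_nhds hlt)
  have hneBot : (nhdsWithin (0:ℝ) (Set.Ioo 0 1)).NeBot := by
    apply mem_closure_iff_nhdsWithin_neBot.mp
    rw [closure_Ioo (by norm_num : (0:ℝ) ≠ 1)]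
    exact ⟨le_refl 0, zero_le_one⟩
  have hev2 := (hev.filter_mono (nhdsWithin_mono 0 Set.Ioo_subset_Icc_self)).and
    eventually_mem_nhdsWithin
  obtain ⟨t, hIt, hmem⟩ := hev2.exists
  -- the perturbed quantizer
  have hΔ : (fun ν k => (1 - t) * qs ν k + t * (N:ℝ)⁻¹) ∈ Δset N K := by
    constructor
    · intro ν k
      exact add_nonneg (mul_nonneg (by linarith [hmem.2]) (hqs0 ν k))
        (mul_nonneg hmem.1.le (by positivity))
    · intro k
      rw [sum_affine (fun ν => qs ν k) (fun _ => (N:ℝ)⁻¹) (1 - t) t, hqs1 k, hsumN]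
      ring
  have hUΔ : (fun _ _ => (N:ℝ)⁻¹) ∈ Δset N K :=
    ⟨fun ν k => by positivity, fun k => hsumN⟩
  have hIYu : IYN (pY P) (fun _ _ => (N:ℝ)⁻¹ : Fin N → Fin K → ℝ) = 0 := by
    have hpNu : ∀ ν : Fin N, pN (pY P) (fun _ _ => (N:ℝ)⁻¹) ν = (N:ℝ)⁻¹ := by
      intro ν; simp only [pN]; rw [← Finset.sum_mul, hpY1, one_mul]
    simp only [IYN, hpNu]
    apply Finset.sum_eq_zero; intro ν _
    apply Finset.sum_eq_zero; intro k _
    rw [div_self (ne_of_gt (by positivity : (0:ℝ) < (N:ℝ)⁻¹)), Real.log_one, mul_zero]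
  have hconv : IYN (pY P) (fun ν k => (1 - t) * qs ν k + t * (N:ℝ)⁻¹) ≤
      (1 - t) * IYN (pY P) qs + t * IYN (pY P) (fun _ _ => (N:ℝ)⁻¹) :=
    IYN_convex (pY P) hpY ⟨hqs0, hqs1⟩ hUΔ hmem.1.le hmem.2.le
  have hmono : IYN (pY P) qs ≤
      IYN (pY P) (fun ν k => (1 - t) * qs ν k + t * (N:ℝ)⁻¹) := by
    have := hmax _ hΔ hIt.le
    linarith
  obtain ⟨hnn, heqz⟩ := IYN_nonneg_eq (pY P) hpY hpY1 qs hqs0 hqs1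
  have hzero : IYN (pY P) qs = 0 := by
    rw [hIYu] at hconv
    have h1 : IYN (pY P) qs ≤ 0 := by nlinarith [hmem.1]
    linarith
  have hq_eq := heqz hzero
  have hIXN0 : IXN P qs = 0 := by
    simp only [IXN]
    apply Finset.sum_eq_zero; intro x _
    apply Finset.sum_eq_zero; intro ν _
    have hA : pXN P qs x ν = pX P x * pN (pY P) qs ν := by
      simp only [pXN, pX, Finset.sum_mul]
      exact Finset.sum_congr rfl fun k _ => by rw [hq_eq ν k]
    rw [hA]
    rcases eq_or_ne (pX P x * pN (pY P) qs ν) 0 with h | h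
    · rw [h]; simp
    · rw [div_self h, Real.log_one, mul_zero]
  linarith
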